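/- The derivation D := r²·s⁻²·∂_r + r·s⁻¹·∂_s of ℂ[r, s, s⁻¹] maps B into B, i.e. it restricts to a derivation of the coordinate ring of the ruled surface z³ = xy²; explicitly, D(rⁿsᵐ) = (n + m)·r^{n+1}s^{m−2}. (The exceptional derivation in part 3 of the Lemma on derivations of the ruled surface.) -/

import Mathlib

/-- The ring `ℂ[r, s, s⁻¹]` of polynomials in `r` that are Laurent polynomials
in `s`, realized as the monoid algebra of `ℕ × ℤ` over `ℂ`. -/
abbrev PolyLaurent : Type := AddMonoidAlgebra ℂ (ℕ × ℤ)

/-- The monomial `rⁿ sᵐ` in `ℂ[r, s, s⁻¹]`. -/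
noncomputable def mono (n : ℕ) (m : ℤ) : PolyLaurent :=
  AddMonoidAlgebra.single (n, m) 1

/-- The coordinate ring `B` of the cubic ruled surface `z³ = x y²`: the
subalgebra of `ℂ[r, s, s⁻¹]` generated by `r`, `r·s⁻¹` and `r·s²`. -/
noncomputable def ruledB : Subalgebra ℂ PolyLaurent :=
  Algebra.adjoin ℂ {mono 1 0, mono 1 (-1), mono 1 2}

/-- The partial derivative `∂_r` of `ℂ[r, s, s⁻¹]`, sending `rⁿsᵐ` to
`n·r^{n−1}sᵐ`. -/
noncomputable def dr : PolyLaurent →ₗ[ℂ] PolyLaurent :=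
  (AddMonoidAlgebra.coeffLinearEquiv ℂ).symm.toLinearMap ∘ₗ
    (Finsupp.lsum ℂ fun (p : ℕ × ℤ) => (p.1 : ℂ) • Finsupp.lsingle (R := ℂ) (M := ℂ) (p.1 - 1, p.2)) ∘ₗ
    (AddMonoidAlgebra.coeffLinearEquiv ℂ).toLinearMap

/-- The partial derivative `∂_s` of `ℂ[r, s, s⁻¹]`, sending `rⁿsᵐ` to
`m·rⁿs^{m−1}`. -/
noncomputable def ds : PolyLaurent →ₗ[ℂ] PolyLaurent :=
  (AddMonoidAlgebra.coeffLinearEquiv ℂ).symm.toLinearMap ∘ₗ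
    (Finsupp.lsum ℂ fun (p : ℕ × ℤ) => (p.2 : ℂ) • Finsupp.lsingle (R := ℂ) (M := ℂ) (p.1, p.2 - 1)) ∘ₗ
    (AddMonoidAlgebra.coeffLinearEquiv ℂ).toLinearMap

/-- The exceptional derivation `D := r²·s⁻²·∂_r + r·s⁻¹·∂_s` of the ruled
surface `z³ = xy²`. -/
noncomputable def Dop : PolyLaurent →ₗ[ℂ] PolyLaurent :=
  (LinearMap.mulLeft ℂ (mono 2 (-2))) ∘ₗ dr + (LinearMap.mulLeft ℂ (mono 1 (-1))) ∘ₗ ds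

lemma dr_mono (n : ℕ) (m : ℤ) : dr (mono n m) = (n:ℂ) • mono (n-1) m := by
  rw [dr, mono]
  simp [mono, AddMonoidAlgebra.coeffLinearEquiv_apply, AddMonoidAlgebra.coeffLinearEquiv_symm_apply, AddMonoidAlgebra.coeff_single, Finsupp.lsum_single, AddMonoidAlgebra.ofCoeff_single]
lemma ds_mono (n : ℕ) (m : ℤ) : ds (mono n m) = (m:ℂ) • mono n (m-1) := by
  rw [ds, mono]
  simp [mono, AddMonoidAlgebra.coeffLinearEquiv_apply, AddMonoidAlgebra.coeffLinearEquiv_symm_apply, AddMonoidAlgebra.coeff_single, Finsupp.lsum_single, AddMonoidAlgebra.ofCoeff_single]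
lemma mono_mul (n n' : ℕ) (m m' : ℤ) : mono n m * mono n' m' = mono (n+n') (m+m') := by
  simp [mono, AddMonoidAlgebra.single_mul_single]

lemma Dop_mono (n : ℕ) (m : ℤ) : Dop (mono n m) = ((n:ℂ)+m) • mono (n+1) (m-2) := by
  simp only [Dop, LinearMap.add_apply, LinearMap.comp_apply, LinearMap.mulLeft_apply,
    dr_mono, ds_mono, mul_smul_comm, mono_mul]
  rcases n with _ | k
  · simp; ring_nf
  · have : (2 + (k + 1 - 1)) = k + 1 + 1 := by omega
    rw [this]
    have : (-2 + m) = m - 2 := by ring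
    rw [this]
    have : (1 + (k+1)) = k + 1 + 1 := by omega
    rw [this]
    have : (-1 + (m-1)) = m - 2 := by ring
    rw [this, ← add_smul]


lemma single_eq_smul_mono (p : ℕ × ℤ) (c : ℂ) :
    (AddMonoidAlgebra.single p c : PolyLaurent) = c • mono p.1 p.2 := by
  simp only [mono, AddMonoidAlgebra.smul_single, smul_eq_mul, mul_one]

lemma Dop_mono_mul (a b : ℕ × ℤ) :
    Dop (mono a.1 a.2 * mono b.1 b.2) =
      mono a.1 a.2 * Dop (mono b.1 b.2) + Dop (mono a.1 a.2) * mono b.1 b.2 := by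
  rw [mono_mul, Dop_mono, Dop_mono, Dop_mono, mul_smul_comm, smul_mul_assoc, mono_mul, mono_mul]
  have h1 : a.1 + (b.1 + 1) = a.1 + b.1 + 1 := by omega
  have h2 : a.2 + (b.2 - 2) = a.2 + b.2 - 2 := by ring
  have h3 : (a.1 + 1) + b.1 = a.1 + b.1 + 1 := by omega
  have h4 : (a.2 - 2) + b.2 = a.2 + b.2 - 2 := by ring
  rw [h1, h2, h3, h4, ← add_smul]
  congr 1
  push_cast
  ring

lemma Dop_mul (x y : PolyLaurent) : Dop (x * y) = x * Dop y + Dop x * y := by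
  induction x using AddMonoidAlgebra.induction_linear with
  | zero => simp
  | add f g hf hg => simp only [add_mul, map_add, hf, hg]; ring
  | single a c =>
    induction y using AddMonoidAlgebra.induction_linear with
    | zero => simp
    | add f g hf hg => simp only [mul_add, map_add, hf, hg]; ring
    | single b d =>
      rw [single_eq_smul_mono a c, single_eq_smul_mono b d]
      rw [smul_mul_smul_comm]
      rw [map_smul, map_smul, map_smul, Dop_mono_mul]
      simp only [smul_add, mul_smul_comm, smul_mul_assoc, smul_smul]
      ring_nf

/-- **The exceptional derivation of the ruled surface (part 3 of the Lemma on
derivations of the ruled surface `z³ = xy²`).**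
The derivation `D = r²·s⁻²·∂_r + r·s⁻¹·∂_s` of `ℂ[r, s, s⁻¹]` maps `B` into
`B`, i.e. it restricts to a derivation of the coordinate ring of the ruled
surface; explicitly, `D(rⁿsᵐ) = (n + m)·r^{n+1}s^{m−2}`. -/
theorem ruled_surface_derivation_D :
    (∀ b ∈ ruledB, Dop b ∈ ruledB) ∧
    (∀ (n : ℕ) (m : ℤ),
      Dop (mono n m) = ((n : ℂ) + (m : ℂ)) • mono (n + 1) (m - 2)) := by
  constructor
  · intro b hb
    refine Algebra.adjoin_induction (p := fun x _ => Dop x ∈ ruledB) ?_ ?_ ?_ ?_ hb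
    · intro x hx
      simp only [Set.mem_insert_iff, Set.mem_singleton_iff] at hx
      rcases hx with rfl | rfl | rfl
      · rw [Dop_mono]
        have h : mono 2 (-2) = mono 1 (-1) * mono 1 (-1) := by rw [mono_mul]; norm_num
        norm_num [h]
        exact mul_mem (Algebra.subset_adjoin (by simp)) (Algebra.subset_adjoin (by simp))
      · rw [Dop_mono]; norm_num
      · rw [Dop_mono]
        have h : mono 2 0 = mono 1 0 * mono 1 0 := by rw [mono_mul]; norm_num
        norm_num [h]
        refine Subalgebra.smul_mem _ ?_ _
        exact mul_mem (Algebra.subset_adjoin (by simp)) (Algebra.subset_adjoin (by simp))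
    · intro c
      have h : (algebraMap ℂ PolyLaurent) c = c • mono 0 0 := by
        rw [Algebra.algebraMap_eq_smul_one]
        congr 1
      rw [h, map_smul, Dop_mono]
      norm_num
    · intro x y _ _ px py
      rw [map_add]; exact add_mem px py
    · intro x y hx hy px py
      rw [Dop_mul]
      exact add_mem (mul_mem hx py) (mul_mem px hy)
  · intro n m
    exact Dop_mono n m
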